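/- Let q = 2^k and let U be a subgroup of the multiplicative group of 𝔽_q of order n. If n^4 > (q - n)^3, then there exists α ∈ U with α + 1 ∈ U. -/

import Mathlib

open Finset Complex

private lemma numeric_aux5 {m q : ℝ} (hm : 3 ≤ m) (hqm : m*(m-1)^3 + 2 ≤ q) :
    (m-1)*(m-2) * Real.sqrt q < q + 1 - 3*m := by
  have hq0 : (0:ℝ) ≤ q := by nlinarith [pow_pos (show (0:ℝ) < m-1 by linarith) 3]
  have hs := Real.sq_sqrt hq0
  have h2 := sq_nonneg (Real.sqrt q - (m-1)^2)
  have h3 : 0 ≤ Real.sqrt q := Real.sqrt_nonneg q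
  nlinarith [mul_nonneg (show (0:ℝ) ≤ m - 2 by linarith) h2, sq_nonneg (m-1), sq_nonneg (m-3),
    mul_pos (show (0:ℝ) < m-1 by linarith) (show (0:ℝ) < m-2 by linarith)]

theorem stmt_5 (k : ℕ) (hk : 1 ≤ k) (F : Type*) [Field F] [Fintype F]
    (q : ℕ) (hq : q = 2 ^ k) (hF : Fintype.card F = q)
    (U : Subgroup Fˣ) (n : ℕ) (hn : Nat.card U = n)
    (h : n ^ 4 > (q - n) ^ 3) :
    ∃ α β : Fˣ, α ∈ U ∧ β ∈ U ∧ (β : F) = (α : F) + 1 := by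
  classical
  -- characteristic 2
  haveI hchar2 : CharP F 2 := by
    have h2 := ringChar.charP F
    obtain ⟨j, hp, hc⟩ := FiniteField.card F (ringChar F)
    have : ringChar F = 2 := by
      have hdvd : ringChar F ∣ 2 ^ k := by
        rw [← hq, ← hF, hc]; exact dvd_pow_self _ (by positivity)
      exact (Nat.prime_dvd_prime_iff_eq hp Nat.prime_two).mp (hp.dvd_of_dvd_pow hdvd)
    rwa [this] at h2
  have hcard : Fintype.card Fˣ = q - 1 := by rw [Fintype.card_units, hF]
  have hq2 : 2 ≤ q := by rw [hq]; exact Nat.one_lt_two_pow_iff.mpr (by omega)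
  have hn0 : 0 < n := by rw [← hn]; exact Nat.card_pos
  -- n divides q - 1
  have hn_dvd : n ∣ q - 1 := by
    have hdvd := Subgroup.card_subgroup_dvd_card U
    rwa [hn, Nat.card_eq_fintype_card, hcard] at hdvd
  obtain ⟨m, hnm⟩ := hn_dvd
  have hm0 : 0 < m := by
    rcases Nat.eq_zero_or_pos m with hz | hz
    · rw [hz, mul_zero] at hnm; omega
    · exact hz
  have hqeq : q = n * m + 1 := by omega
  -- U is the set of n-th roots of unity
  have hU : ∀ x : Fˣ, x ∈ U ↔ x ^ n = 1 := by
    have hsub : ∀ x : Fˣ, x ∈ U → x ^ n = 1 := by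
      intro x hx
      have hh : (⟨x, hx⟩ : U) ^ n = 1 := by rw [← hn]; exact pow_card_eq_one'
      exact_mod_cast congrArg (Subgroup.subtype U) hh
    set T : Finset Fˣ := {g | g ^ n = (1:Fˣ)} with hT
    have hTcard : T.card ≤ n := by
      calc T.card ≤ Multiset.card (Polynomial.nthRoots n ((Units.coeHom F) 1)) :=
            card_nthRoots_subgroup_units (Units.coeHom F) (fun _ _ h => Units.ext h) hn0 1
      _ ≤ n := Polynomial.card_nthRoots n _
    have hUT : (U : Set Fˣ).toFinset ⊆ T := by
      intro x hx
      simp only [Set.mem_toFinset, SetLike.mem_coe] at hx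
      simp only [hT, mem_filter, mem_univ, true_and]
      exact hsub x hx
    have hcardU : (U : Set Fˣ).toFinset.card = n := by
      rw [Set.toFinset_card, ← Nat.card_eq_fintype_card, ← hn]
      exact Nat.card_congr (Equiv.setCongr rfl)
    have heq : (U : Set Fˣ).toFinset = T := Finset.eq_of_subset_of_card_le hUT (by omega)
    intro x
    refine ⟨hsub x, fun hx => ?_⟩
    have hmem : x ∈ T := by simp [hT, hx]
    rw [← heq] at hmem
    simpa using hmem
  -- the case m = 1 : U is everything
  rcases eq_or_ne m 1 with hm1 | hmne1
  · rw [hm1, mul_one] at hnm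
    have hnq : n = q - 1 := by omega
    have hq4 : 3 ≤ q := by
      by_contra hcon
      have : q = 2 := by omega
      rw [this] at hnq h; simp [hnq] at h
    have hlt : 1 < Fintype.card Fˣ := by omega
    obtain ⟨α, hα⟩ := Fintype.exists_ne_of_one_lt_card hlt 1
    have hne0 : (α : F) + 1 ≠ 0 := by
      intro hc
      apply hα
      have : (α : F) = 1 := by
        have hneg : (α : F) = -1 := by linear_combination hc
        rwa [CharTwo.neg_eq] at hneg
      exact Units.ext this
    have hunit : IsUnit ((α : F) + 1) := isUnit_iff_ne_zero.mpr hne0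
    refine ⟨α, hunit.unit, ?_, ?_, ?_⟩
    · rw [hU, hnq, ← hcard, pow_card_eq_one]
    · rw [hU, hnq, ← hcard, pow_card_eq_one]
    · exact hunit.unit_spec
  -- main case : 3 ≤ m
  have hqodd : Odd (q - 1) := by
    refine Nat.Even.sub_odd (by omega) ?_ odd_one
    rw [hq]; exact (Nat.even_pow).mpr ⟨even_two, by omega⟩
  have hmodd : Odd m := by
    rw [hnm] at hqodd
    exact (Nat.odd_mul.mp hqodd).2
  have hm3 : 3 ≤ m := by
    obtain ⟨t, ht⟩ := hmodd
    omega
  -- the numeric bound : q ≥ m*(m-1)^3 + m + 1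
  have hmsum : n * m = n * (m - 1) + n := by
    have hms : m - 1 + 1 = m := by omega
    calc n * m = n * ((m - 1) + 1) := by rw [hms]
    _ = n * (m - 1) + n := by ring
  have hqn : q - n = n * (m - 1) + 1 := by omega
  have hnlarge : (m - 1) ^ 3 < n := by
    rw [hqn] at h
    have h1 : (n * (m - 1)) ^ 3 < n ^ 4 := lt_of_le_of_lt
      (Nat.pow_le_pow_left (Nat.le_add_right _ 1) 3) h
    have h2 : n ^ 3 * (m - 1) ^ 3 < n ^ 3 * n := by
      calc n ^ 3 * (m - 1) ^ 3 = (n * (m - 1)) ^ 3 := by ring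
      _ < n ^ 4 := h1
      _ = n ^ 3 * n := by ring
    exact Nat.lt_of_mul_lt_mul_left h2
  have hqbig : m * (m - 1) ^ 3 + 2 ≤ q := by
    have h1 : ((m - 1) ^ 3 + 1) * m ≤ n * m :=
      Nat.mul_le_mul_right _ (by omega)
    have h2 : ((m - 1) ^ 3 + 1) * m = m * (m - 1) ^ 3 + m := by ring
    omega
  -- construct the character η of order m with kernel U
  obtain ⟨g, hg⟩ := IsCyclic.exists_generator (α := Fˣ)
  have hζ := Complex.isPrimitiveRoot_exp m (by omega)
  have hζu : IsUnit (Complex.exp (2 * Real.pi * Complex.I / m)) := hζ.isUnit hm0.ne'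
  have hmem : hζu.unit ∈ rootsOfUnity (Fintype.card Fˣ) ℂ := by
    rw [_root_.mem_rootsOfUnity]
    rw [Units.ext_iff]
    push_cast
    rw [hcard, hnm, IsUnit.unit_spec, pow_mul', hζ.pow_eq_one, one_pow]
  set η : MulChar F ℂ := MulChar.ofRootOfUnity hmem hg with hηdef
  have hspec : η (g : F) = Complex.exp (2 * Real.pi * Complex.I / m) := by
    rw [hηdef, MulChar.ofRootOfUnity_spec hmem hg, IsUnit.unit_spec]
  have htriv : ∀ s : ℕ, η ^ s = 1 ↔ m ∣ s := by
    intro s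
    rcases Nat.eq_zero_or_pos s with rfl | hs
    · simp
    rw [MulChar.eq_iff hg, MulChar.one_apply_coe, MulChar.pow_apply' _ hs.ne', hspec,
      hζ.pow_eq_one_iff_dvd]
  have hker : ∀ x : Fˣ, η (x:F) = 1 ↔ x ∈ U := by
    intro x
    obtain ⟨t, rfl⟩ := hg x
    have horder : orderOf g = n * m := by
      rw [orderOf_eq_card_of_forall_mem_zpowers hg, Nat.card_eq_fintype_card, hcard, hnm]
    have hval : η ((g ^ t : Fˣ) : F) = Complex.exp (2 * Real.pi * Complex.I / m) ^ t := by
      rw [← MulChar.coe_equivToUnitHom, map_zpow]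
      push_cast
      rw [MulChar.coe_equivToUnitHom, hspec]
    rw [hval, hζ.zpow_eq_one_iff_dvd, hU, ← zpow_natCast, ← zpow_mul,
      ← orderOf_dvd_iff_zpow_eq_one, horder]
    push_cast
    rw [mul_comm (n:ℤ) (m:ℤ)]
    exact ((mul_dvd_mul_iff_right (show (n:ℤ) ≠ 0 by exact_mod_cast hn0.ne')).symm).symm.symm
  -- indicator function via geometric sums
  have hgeom : ∀ x : F, (∑ i ∈ Finset.range m, (η ^ i) x)
      = if ∃ u : Fˣ, u ∈ U ∧ (u:F) = x then (m:ℂ) else 0 := by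
    intro x
    by_cases hx : IsUnit x
    · obtain ⟨u, rfl⟩ := hx
      have hval : ∀ i : ℕ, (η ^ i) (u:F) = (η (u:F)) ^ i := fun i => MulChar.pow_apply_coe η i u
      have hzm : (η (u:F)) ^ m = 1 := by
        rw [← hval m, (htriv m).mpr dvd_rfl, MulChar.one_apply_coe]
      by_cases hu : u ∈ U
      · rw [if_pos ⟨u, hu, rfl⟩]
        simp [hval, (hker u).mpr hu]
      · rw [if_neg (by rintro ⟨u', hu', hc⟩; exact hu (Units.ext hc ▸ hu'))]
        have hz : η (u:F) ≠ 1 := fun hcon => hu ((hker u).mp hcon)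
        simp only [hval]
        rw [geom_sum_eq hz, hzm, sub_self, zero_div]
    · rw [if_neg (by rintro ⟨u, _, rfl⟩; exact hx u.isUnit)]
      exact Finset.sum_eq_zero fun i _ => (η ^ i).map_nonunit hx
  -- assume no solution
  by_contra hcon
  push_neg at hcon
  -- the double character sum vanishes
  have hzero : ∑ x : F, (∑ i ∈ range m, (η^i) x) * (∑ j ∈ range m, (η^j) (x+1)) = 0 := by
    apply Finset.sum_eq_zero
    intro x _
    rw [hgeom x, hgeom (x+1)]
    by_cases h1 : ∃ u : Fˣ, u ∈ U ∧ (u:F) = x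
    · by_cases h2 : ∃ u : Fˣ, u ∈ U ∧ (u:F) = x + 1
      · obtain ⟨α, hα, hαx⟩ := h1
        obtain ⟨β, hβ, hβx⟩ := h2
        exact absurd (by rw [hβx, hαx]) (hcon α β hα hβ)
      · rw [if_neg h2, mul_zero]
    · rw [if_neg h1, zero_mul]
  -- expansion into Jacobi sums
  set J : ℕ → ℕ → ℂ := fun i j => jacobiSum (η^i) (η^j) with hJdef
  have hexp : ∑ x : F, (∑ i ∈ range m, (η^i) x) * (∑ j ∈ range m, (η^j) (x+1))
      = ∑ i ∈ range m, ∑ j ∈ range m, J i j := by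
    have h1 : ∀ x : F, (∑ i ∈ range m, (η^i) x) * (∑ j ∈ range m, (η^j) (x+1))
        = ∑ i ∈ range m, ∑ j ∈ range m, (η^i) x * (η^j) (x+1) := fun x =>
      Finset.sum_mul_sum _ _ _ _
    rw [Finset.sum_congr rfl fun x _ => h1 x, Finset.sum_comm]
    refine Finset.sum_congr rfl fun i _ => ?_
    rw [Finset.sum_comm]
    refine Finset.sum_congr rfl fun j _ => ?_
    rw [hJdef]
    simp only [jacobiSum]
    refine Finset.sum_congr rfl fun x _ => ?_
    rw [CharTwo.sub_eq_add, add_comm]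
  rw [hexp] at hzero
  -- facts about nontrivial powers
  have hη1 : ∀ s, s ∈ Ico 1 m → η ^ s ≠ 1 := by
    intro s hs
    rw [mem_Ico] at hs
    rw [Ne, htriv]
    intro hd
    have := Nat.le_of_dvd (by omega) hd
    omega
  -- values of the Jacobi sums
  have hJ00 : J 0 0 = (q:ℂ) - 2 := by
    simp only [hJdef, pow_zero]
    rw [jacobiSum_one_one, hF]
  have hJ0 : ∀ j ∈ Ico 1 m, J 0 j = -1 := by
    intro j hj
    simp only [hJdef, pow_zero]
    exact jacobiSum_one_nontrivial (hη1 j hj)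
  have hJi0 : ∀ i ∈ Ico 1 m, J i 0 = -1 := by
    intro i hi
    simp only [hJdef, pow_zero]
    rw [jacobiSum_comm]
    exact jacobiSum_one_nontrivial (hη1 i hi)
  have hJdiag : ∀ i ∈ Ico 1 m, J i (m - i) = -1 := by
    intro i hi
    rw [mem_Ico] at hi
    have hmul : η ^ i * η ^ (m - i) = 1 := by
      rw [← pow_add]
      refine (htriv _).mpr ?_
      have hii : i + (m - i) = m := by omega
      rw [hii]
    have hinv : η ^ (m - i) = (η ^ i)⁻¹ := eq_inv_of_mul_eq_one_right hmul
    rw [hJdef]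
    simp only
    rw [hinv, jacobiSum_nontrivial_inv (hη1 i (mem_Ico.mpr hi)),
      show ((-1 : F)) = 1 from CharTwo.neg_eq 1, MulChar.map_one]
  -- absolute value of nontrivial Jacobi sums
  have habs : ∀ i ∈ Ico 1 m, ∀ j ∈ Ico 1 m \ {m - i}, ‖J i j‖ = Real.sqrt q := by
    intro i hi j hj
    rw [mem_sdiff, mem_singleton] at hj
    obtain ⟨hj1, hj2⟩ := hj
    rw [mem_Ico] at hi; rw [mem_Ico] at hj1
    have hij : ¬ m ∣ (i + j) := by
      intro hd
      rcases hd with ⟨c, hc⟩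
      have hcle : c ≤ 1 := by
        by_contra hcge
        have h5 : m * 2 ≤ m * c := Nat.mul_le_mul_left m (by omega)
        omega
      interval_cases c <;> omega
    have hχφ : η ^ i * η ^ j ≠ 1 := by
      rw [← pow_add, Ne, htriv]
      exact hij
    have hrc : ringChar ℂ ≠ ringChar F := by
      rw [ringChar.eq ℂ 0, ringChar.eq F 2]
      omega
    have hkey := jacobiSum_mul_jacobiSum_inv hrc (hη1 i (mem_Ico.mpr hi))
      (hη1 j (mem_Ico.mpr hj1)) hχφ
    have hconj : jacobiSum (η^i)⁻¹ (η^j)⁻¹ = (starRingEnd ℂ) (jacobiSum (η^i) (η^j)) := by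
      rw [← MulChar.star_eq_inv, ← MulChar.star_eq_inv]
      exact jacobiSum_ringHomComp _ _ _
    rw [hconj] at hkey
    have hnormsq : Complex.normSq (J i j) = (q : ℝ) := by
      have := hkey
      rw [Complex.mul_conj] at this
      rw [hF] at this
      exact_mod_cast this
    rw [Complex.norm_def, hnormsq]
  -- split the double sum
  have hsplit : ∀ f : ℕ → ℂ, ∑ i ∈ range m, f i = f 0 + ∑ i ∈ Ico 1 m, f i := by
    intro f
    rw [Finset.range_eq_Ico, Finset.sum_eq_sum_Ico_succ_bot hm0]
  have hmi_mem : ∀ i ∈ Ico 1 m, m - i ∈ Ico 1 m := by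
    intro i hi
    rw [mem_Ico] at hi ⊢
    omega
  set R : ℕ → ℂ := fun i => ∑ j ∈ Ico 1 m \ {m - i}, J i j with hRdef
  have hinner : ∀ i ∈ Ico 1 m, ∑ j ∈ range m, J i j = -2 + R i := by
    intro i hi
    rw [hsplit (fun j => J i j), hJi0 i hi,
      Finset.sum_eq_sum_sdiff_singleton_add (hmi_mem i hi) (fun j => J i j),
      hJdiag i hi, hRdef]
    ring
  have houter : ∑ j ∈ range m, J 0 j = (q:ℂ) - 2 - ((m:ℂ) - 1) := by
    rw [hsplit (fun j => J 0 j), hJ00, Finset.sum_congr rfl (fun j hj => hJ0 j hj),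
      Finset.sum_const, Nat.card_Ico]
    have : ((m - 1 : ℕ) : ℂ) = (m:ℂ) - 1 := by
      have : (1:ℕ) ≤ m := by omega
      push_cast [this]
      ring
    rw [nsmul_eq_mul, this]
    ring
  have htot : (0:ℂ) = ((q:ℂ) - 2 - ((m:ℂ) - 1)) + (((m:ℂ) - 1) * (-2) + ∑ i ∈ Ico 1 m, R i) := by
    rw [← houter]
    calc (0:ℂ) = ∑ i ∈ range m, ∑ j ∈ range m, J i j := hzero.symm
    _ = (∑ j ∈ range m, J 0 j) + ∑ i ∈ Ico 1 m, ∑ j ∈ range m, J i j :=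
        hsplit (fun i => ∑ j ∈ range m, J i j)
    _ = (∑ j ∈ range m, J 0 j) + ∑ i ∈ Ico 1 m, (-2 + R i) := by
        rw [Finset.sum_congr rfl hinner]
    _ = (∑ j ∈ range m, J 0 j) + (((m:ℂ) - 1) * (-2) + ∑ i ∈ Ico 1 m, R i) := by
        rw [Finset.sum_add_distrib, Finset.sum_const, Nat.card_Ico, nsmul_eq_mul]
        have : ((m - 1 : ℕ) : ℂ) = (m:ℂ) - 1 := by
          have : (1:ℕ) ≤ m := by omega
          push_cast [this]
          ring
        rw [this]
  have hsum_eq : ∑ i ∈ Ico 1 m, R i = 3 * (m:ℂ) - 1 - (q:ℂ) := by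
    linear_combination -htot
  -- bound the remaining sum
  have hbound : ‖∑ i ∈ Ico 1 m, R i‖
      ≤ ((m:ℝ) - 1) * (((m:ℝ) - 2) * Real.sqrt q) := by
    calc ‖∑ i ∈ Ico 1 m, R i‖ ≤ ∑ i ∈ Ico 1 m, ‖R i‖ :=
        norm_sum_le _ _
    _ ≤ ∑ i ∈ Ico 1 m, (((m:ℝ) - 2) * Real.sqrt q) := by
        apply Finset.sum_le_sum
        intro i hi
        calc ‖R i‖ ≤ ∑ j ∈ Ico 1 m \ {m - i}, ‖J i j‖ :=
            norm_sum_le _ _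
        _ = ∑ j ∈ Ico 1 m \ {m - i}, Real.sqrt q := Finset.sum_congr rfl (habs i hi)
        _ = ((m:ℝ) - 2) * Real.sqrt q := by
            rw [Finset.sum_const, Finset.card_sdiff_of_subset (by
              simpa using hmi_mem i hi), Nat.card_Ico, Finset.card_singleton, nsmul_eq_mul]
            congr 1
            rw [mem_Ico] at hi
            push_cast [show (1:ℕ) ≤ m - 1 by omega, show (1:ℕ) ≤ m by omega]
            ring
    _ = ((m:ℝ) - 1) * (((m:ℝ) - 2) * Real.sqrt q) := by
        rw [Finset.sum_const, Nat.card_Ico, nsmul_eq_mul]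
        congr 1
        push_cast [show (1:ℕ) ≤ m by omega]
        ring
  -- final contradiction
  have hlow : (q:ℝ) + 1 - 3*(m:ℝ) ≤ ‖∑ i ∈ Ico 1 m, R i‖ := by
    rw [hsum_eq]
    have : (3 * (m:ℂ) - 1 - (q:ℂ)) = (((3 * (m:ℝ) - 1 - (q:ℝ)) : ℝ) : ℂ) := by push_cast; ring
    rw [this, Complex.norm_real, Real.norm_eq_abs]
    calc (q:ℝ) + 1 - 3*(m:ℝ) = -(3 * (m:ℝ) - 1 - (q:ℝ)) := by ring
    _ ≤ |3 * (m:ℝ) - 1 - (q:ℝ)| := neg_le_abs _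
  have hnum : ((m:ℝ) - 1) * ((m:ℝ) - 2) * Real.sqrt q < (q:ℝ) + 1 - 3*(m:ℝ) := by
    apply numeric_aux5
    · exact_mod_cast hm3
    · calc (m:ℝ)*((m:ℝ)-1)^3 + 2 = ((m * (m-1)^3 + 2 : ℕ) : ℝ) := by
            push_cast [show (1:ℕ) ≤ m by omega]; ring
      _ ≤ (q:ℝ) := by exact_mod_cast hqbig
  rw [mul_assoc] at hnum
  linarith [hbound, hlow, hnum]
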